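/- Let P be encoded by a hook code (h_1^{l_1},...,h_n^{l_n}) in a t × s box with h_n = 0, and let P̄ be encoded by (h_1^{l_1},...,h_n^{l_n - 1}) in a (t-1) × s box (dropping the last column of the code). Then κ(P) = κ(P̄) + 1, where κ is computed by the formula κ = s + max{t+1-s, 0, τ_1,...,τ_n} with the respective parameters (s, t) and (s, t-1). -/

import Mathlib

lemma fold_max_shift (A : ℤ) (β : Type*) (S : Finset β) (f : β → ℤ)
    (x : β) (hx : x ∈ S) (hfx : 1 ≤ f x) :
    S.fold max (max A 0) f = S.fold max (max (A - 1) 0) (fun b => f b - 1) + 1 := by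
  have h1 : S.fold max (max (A-1) 0) (fun b => f b - 1) + 1
      = S.fold max (max (A-1) 0 + 1) (fun b => (f b - 1) + 1) := by
    exact (Finset.fold_hom (m := fun z : ℤ => z + 1)
      (fun a b => by simp [max_add_add_right])).symm
  rw [h1]
  have h2 : max (A-1) 0 + 1 = max A 1 := by omega
  have h3 : (fun b => (f b - 1) + 1) = f := by funext b; ring
  rw [h2, h3]
  apply le_antisymm
  · rw [Finset.fold_max_le]
    constructor
    · calc max A 0 ≤ max A (f x) := by
            exact max_le_max le_rfl (by omega)
        _ ≤ _ := by
            apply max_le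
            · exact (Finset.le_fold_max _).mpr (Or.inl (le_max_left _ _))
            · exact (Finset.le_fold_max _).mpr (Or.inr ⟨x, hx, le_rfl⟩)
    · intro y hy
      exact (Finset.le_fold_max _).mpr (Or.inr ⟨y, hy, le_rfl⟩)
  · rw [Finset.fold_max_le]
    constructor
    · apply max_le
      · exact (Finset.le_fold_max _).mpr (Or.inl (le_max_left _ _))
      · exact (Finset.le_fold_max _).mpr (Or.inr ⟨x, hx, hfx⟩)
    · intro y hy
      exact (Finset.le_fold_max _).mpr (Or.inr ⟨y, hy, le_rfl⟩)



/-- `κ` computed from a hook code `(h_1^{l_1},…,h_n^{l_n})` in a `t × s` box: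
`κ = s + max{t+1-s, 0, τ_1, …, τ_n}` where `τ_k = (l_k + ⋯ + l_n) - h_k`. -/
def kappaCode (s t n : ℕ) (h l : Fin n → ℕ) : ℤ :=
  s + Finset.fold max (max ((t : ℤ) + 1 - s) 0)
    (fun k => (∑ i ∈ Finset.univ.filter (fun i => k ≤ i), (l i : ℤ)) - h k) Finset.univ

/-- If `P` has hook code `(h_1^{l_1},…,h_n^{l_n})` in a `t × s` box with `h_n = 0`, and `P̄`
has code `(h_1^{l_1},…,h_n^{l_n - 1})` in a `(t-1) × s` box (dropping the last column of the
code), then `κ(P) = κ(P̄) + 1`. -/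
theorem kappa_lastZero_step (s t n : ℕ) (hn : 0 < n) (h l : Fin n → ℕ)
    (hh : StrictAnti h) (hhs : ∀ k, h k ≤ s) (hl : ∀ k, 1 ≤ l k)
    (hsum : ∑ k, l k = t) (hlast : h ⟨n - 1, Nat.sub_lt hn Nat.one_pos⟩ = 0) :
    kappaCode s t n h l =
      kappaCode s (t - 1) n h
        (Function.update l ⟨n - 1, Nat.sub_lt hn Nat.one_pos⟩
          (l ⟨n - 1, Nat.sub_lt hn Nat.one_pos⟩ - 1)) + 1 := by
  set m : Fin n := ⟨n - 1, Nat.sub_lt hn Nat.one_pos⟩ with hm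
  set l' := Function.update l m (l m - 1) with hl'
  have hmem : ∀ k : Fin n, m ∈ Finset.univ.filter (fun i => k ≤ i) := by
    intro k
    have hk := k.isLt
    simp only [Finset.mem_filter, Finset.mem_univ, true_and]
    exact Fin.le_def.mpr (by simp only [hm]; omega)
  -- t ≥ 1
  have ht1 : 1 ≤ t := by
    have h0 := Finset.single_le_sum (f := l) (fun i _ => Nat.zero_le _) (Finset.mem_univ m)
    have := hl m
    omega
  have htc : ((t - 1 : ℕ) : ℤ) = (t : ℤ) - 1 := by omega
  -- sums shift
  have hsumshift : ∀ k : Fin n,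
      (∑ i ∈ Finset.univ.filter (fun i => k ≤ i), (l' i : ℤ))
        = (∑ i ∈ Finset.univ.filter (fun i => k ≤ i), (l i : ℤ)) - 1 := by
    intro k
    rw [← Finset.add_sum_erase _ _ (hmem k), ← Finset.add_sum_erase _ _ (hmem k)]
    have h1 : (l' m : ℤ) = (l m : ℤ) - 1 := by
      simp only [hl', Function.update_self]
      have := hl m; omega
    have h2 : ∀ i ∈ (Finset.univ.filter (fun i => k ≤ i)).erase m, (l' i : ℤ) = l i := by
      intro i hi
      have : i ≠ m := Finset.ne_of_mem_erase hi
      simp [hl', Function.update_of_ne this]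
    rw [h1, Finset.sum_congr rfl h2]
    ring
  -- τ m ≥ 1
  have htau : 1 ≤ (∑ i ∈ Finset.univ.filter (fun i => m ≤ i), (l i : ℤ)) - h m := by
    have hle : (l m : ℤ) ≤ ∑ i ∈ Finset.univ.filter (fun i => m ≤ i), (l i : ℤ) :=
      Finset.single_le_sum (f := fun i => (l i : ℤ)) (fun i _ => Int.natCast_nonneg _) (hmem m)
    have := hl m
    rw [hlast]
    push_cast
    omega
  unfold kappaCode
  rw [htc]
  have key := fold_max_shift ((t : ℤ) + 1 - s) (Fin n) Finset.univ
    (fun k => (∑ i ∈ Finset.univ.filter (fun i => k ≤ i), (l i : ℤ)) - h k)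
    m (Finset.mem_univ m) htau
  rw [key]
  have : ((t : ℤ) + 1 - s - 1) = (t : ℤ) - 1 + 1 - s := by ring
  have hfun : (fun k : Fin n => (∑ i ∈ Finset.univ.filter (fun i => k ≤ i), (l' i : ℤ)) - h k)
      = (fun k : Fin n => ((∑ i ∈ Finset.univ.filter (fun i => k ≤ i), (l i : ℤ)) - h k) - 1) := by
    funext k
    rw [hsumshift k]
    ring
  rw [this, hfun]
  ring
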